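/- arXiv:2401.06648 — 7 statements merged into one kernel-verified Lean document; each statement's English description precedes it below -/
import Mathlib

section
/- Let a ≤ b be real numbers, let C ≥ 0, and let g : ℝ → ℝ be twice differentiable on [a,b] with |g''(x)| ≤ C for all x ∈ [a,b]. Let M ≥ 1 and let p_0, p_1, …, p_M be real numbers with p_0 = a, p_M = b, p_i ≤ p_{i+1} for all i, and p_{i+1} − p_i ≤ d for all i. Then for every x ∈ [a,b], (min_{0 ≤ i ≤ M} g(p_i)) − C·d²/2 ≤ g(x) ≤ (max_{0 ≤ i ≤ M} g(p_i)) + C·d²/2. -/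
/-- Convexity of `x ↦ C/2·x² + g x` when `g'' ≥ -C` on `[a,b]`. -/
lemma aux_convex (a b C : ℝ) (g g' g'' : ℝ → ℝ)
    (hg' : ∀ x ∈ Set.Icc a b, HasDerivWithinAt g (g' x) (Set.Icc a b) x)
    (hg'' : ∀ x ∈ Set.Icc a b, HasDerivWithinAt g' (g'' x) (Set.Icc a b) x)
    (hge : ∀ x ∈ Set.Icc a b, -C ≤ g'' x) :
    ConvexOn ℝ (Set.Icc a b) (fun x => C / 2 * x ^ 2 + g x) := by
  have hsub : interior (Set.Icc a b) ⊆ Set.Icc a b := interior_subset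
  refine convexOn_of_hasDerivWithinAt2_nonneg (f' := fun x => C * x + g' x)
    (f'' := fun x => C + g'' x) (convex_Icc a b) ?_ ?_ ?_ ?_
  · intro x hx
    exact ((continuous_const.mul (continuous_pow 2)).continuousWithinAt).add
      ((hg' x hx).continuousWithinAt)
  · intro x hx
    have h1 : HasDerivWithinAt (fun x : ℝ => C / 2 * x ^ 2) (C * x) (interior (Set.Icc a b)) x := by
      have := ((hasDerivAt_pow 2 x).const_mul (C / 2)).hasDerivWithinAt
        (s := interior (Set.Icc a b))
      exact this.congr_deriv (by norm_num; ring)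
    exact h1.add (((hg' x (hsub hx)).mono hsub))
  · intro x hx
    have h1 : HasDerivWithinAt (fun x : ℝ => C * x) C (interior (Set.Icc a b)) x := by
      simpa using ((hasDerivAt_id x).const_mul C).hasDerivWithinAt (s := interior (Set.Icc a b))
    exact h1.add ((hg'' x (hsub hx)).mono hsub)
  · intro x hx
    have := hge x (hsub hx)
    linarith

/-- Envelope upper bound on one subinterval. -/
lemma aux_upper (a b C d : ℝ) (hC : 0 ≤ C) (g g' g'' : ℝ → ℝ)
    (hg' : ∀ x ∈ Set.Icc a b, HasDerivWithinAt g (g' x) (Set.Icc a b) x)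
    (hg'' : ∀ x ∈ Set.Icc a b, HasDerivWithinAt g' (g'' x) (Set.Icc a b) x)
    (hbound : ∀ x ∈ Set.Icc a b, |g'' x| ≤ C)
    (u v x : ℝ) (hu : u ∈ Set.Icc a b) (hv : v ∈ Set.Icc a b)
    (hux : u ≤ x) (hxv : x ≤ v) (hgap : v - u ≤ d) :
    g x ≤ max (g u) (g v) + C * d ^ 2 / 2 := by
  have hconv : ConvexOn ℝ (Set.Icc a b) (fun x => C / 2 * x ^ 2 + g x) :=
    aux_convex a b C g g' g'' hg' hg'' (fun x hx => (abs_le.mp (hbound x hx)).1.trans_eq' rfl)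
  rcases eq_or_lt_of_le (hux.trans hxv) with h | huv
  · -- u = v, so x = u
    have hxu : x = u := le_antisymm (h ▸ hxv) hux
    have : 0 ≤ C * d ^ 2 / 2 := by positivity
    calc g x = g u := by rw [hxu]
    _ ≤ max (g u) (g v) + C * d ^ 2 / 2 := by
        have := le_max_left (g u) (g v); linarith
  · set t : ℝ := (x - u) / (v - u) with ht
    have hvu : 0 < v - u := by linarith
    have ht0 : 0 ≤ t := div_nonneg (by linarith) hvu.le
    have ht1 : t ≤ 1 := by
      rw [div_le_one hvu]; linarith
    have hx : x = (1 - t) * u + t * v := by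
      rw [ht]
      field_simp
      ring
    have hkey := hconv.2 hu hv (by linarith : (0:ℝ) ≤ 1 - t) ht0 (by ring)
    simp only [smul_eq_mul] at hkey
    rw [← hx] at hkey
    have hquad : (1 - t) * (C / 2 * u ^ 2) + t * (C / 2 * v ^ 2) - C / 2 * x ^ 2
        = C / 2 * (t * (1 - t)) * (v - u) ^ 2 := by
      rw [hx]; ring
    have htt : t * (1 - t) ≤ 1 := by nlinarith
    have hd : (v - u) ^ 2 ≤ d ^ 2 := by nlinarith
    have h3 : t * (1 - t) * (v - u) ^ 2 ≤ d ^ 2 := by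
      nlinarith [mul_nonneg ht0 (by linarith : (0:ℝ) ≤ 1 - t), sq_nonneg (v - u)]
    have h2 : C / 2 * (t * (1 - t)) * (v - u) ^ 2 ≤ C * d ^ 2 / 2 := by
      have := mul_le_mul_of_nonneg_left h3 (by linarith : (0:ℝ) ≤ C / 2)
      linarith [this]
    have hmix : (1 - t) * g u + t * g v ≤ max (g u) (g v) := by
      have h1 := le_max_left (g u) (g v)
      have h2 := le_max_right (g u) (g v)
      nlinarith
    nlinarith [hkey]

/-- There is a subinterval containing `x`. -/
lemma aux_mem (a b : ℝ) (M : ℕ) (hM : 1 ≤ M) (p : Fin (M + 1) → ℝ)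
    (hp0 : p 0 = a) (hpM : p (Fin.last M) = b)
    (hmono : ∀ i : Fin M, p i.castSucc ≤ p i.succ)
    (x : ℝ) (hx : x ∈ Set.Icc a b) :
    ∃ i : Fin M, p i.castSucc ≤ x ∧ x ≤ p i.succ := by
  have hmon : Monotone p := Fin.monotone_iff_le_succ.mpr hmono
  by_cases hlast : p (Fin.last M) ≤ x
  · refine ⟨⟨M - 1, by omega⟩, ?_, ?_⟩
    · have : (⟨M - 1, by omega⟩ : Fin M).castSucc ≤ Fin.last M := Fin.le_last _
      exact (hmon this).trans hlast
    · have : (⟨M - 1, by omega⟩ : Fin M).succ = Fin.last M := by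
        ext; simp; omega
      rw [this, hpM]; exact hx.2
  · -- take the max index with p i ≤ x
    have h0 : p 0 ≤ x := hp0 ▸ hx.1
    classical
    let S : Finset (Fin (M + 1)) := Finset.univ.filter (fun i => p i ≤ x)
    have hS : S.Nonempty := ⟨0, by simp [S, h0]⟩
    obtain ⟨i, hiS, hmax⟩ := S.exists_max_image id hS
    have hpi : p i ≤ x := (Finset.mem_filter.mp hiS).2
    have hine : i ≠ Fin.last M := by
      rintro rfl; exact hlast hpi
    obtain ⟨j, rfl⟩ := Fin.exists_castSucc_eq.mpr hine
    refine ⟨j, hpi, ?_⟩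
    by_contra hlt
    push_neg at hlt
    have : j.succ ∈ S := Finset.mem_filter.mpr ⟨Finset.mem_univ _, hlt.le⟩
    have := hmax _ this
    simp only [id] at this
    exact absurd this (by simp [Fin.lt_iff_val_lt_val])

/-- Core of the paper's Theorem 1 (RESAFE/COL safety envelope): a twice-differentiable
function on `[a,b]` with `|g''| ≤ C` is enclosed between the min and max of its values
at sample points `p 0 = a ≤ p 1 ≤ ⋯ ≤ p M = b` with consecutive gaps at most `d`,
enlarged by `C·d²/2`. -/
theorem stmt_0 (a b C d : ℝ) (hab : a ≤ b) (hC : 0 ≤ C)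
    (g g' g'' : ℝ → ℝ)
    (hg' : ∀ x ∈ Set.Icc a b, HasDerivWithinAt g (g' x) (Set.Icc a b) x)
    (hg'' : ∀ x ∈ Set.Icc a b, HasDerivWithinAt g' (g'' x) (Set.Icc a b) x)
    (hbound : ∀ x ∈ Set.Icc a b, |g'' x| ≤ C)
    (M : ℕ) (hM : 1 ≤ M) (p : Fin (M + 1) → ℝ)
    (hp0 : p 0 = a) (hpM : p (Fin.last M) = b)
    (hmono : ∀ i : Fin M, p i.castSucc ≤ p i.succ)
    (hgap : ∀ i : Fin M, p i.succ - p i.castSucc ≤ d) :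
    ∀ x ∈ Set.Icc a b,
      (Finset.univ.inf' Finset.univ_nonempty (fun i : Fin (M + 1) => g (p i)))
          - C * d ^ 2 / 2 ≤ g x ∧
      g x ≤ (Finset.univ.sup' Finset.univ_nonempty (fun i : Fin (M + 1) => g (p i)))
          + C * d ^ 2 / 2 := by
  intro x hx
  have hmon : Monotone p := Fin.monotone_iff_le_succ.mpr hmono
  have hmem : ∀ i : Fin (M + 1), p i ∈ Set.Icc a b := fun i =>
    ⟨hp0 ▸ hmon (Fin.zero_le i), hpM ▸ hmon (Fin.le_last i)⟩
  obtain ⟨i, hui, hiv⟩ := aux_mem a b M hM p hp0 hpM hmono x hx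
  constructor
  · -- lower bound: apply aux_upper to -g
    have hup :=
      aux_upper a b C d hC (fun y => -g y) (fun y => -g' y) (fun y => -g'' y)
        (fun y hy => (hg' y hy).neg) (fun y hy => (hg'' y hy).neg)
        (fun y hy => by rw [abs_neg]; exact hbound y hy)
        (p i.castSucc) (p i.succ) x (hmem _) (hmem _) hui hiv (hgap i)
    have hinf1 : Finset.univ.inf' Finset.univ_nonempty (fun j : Fin (M + 1) => g (p j))
        ≤ g (p i.castSucc) := Finset.inf'_le _ (Finset.mem_univ _)
    have hinf2 : Finset.univ.inf' Finset.univ_nonempty (fun j : Fin (M + 1) => g (p j))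
        ≤ g (p i.succ) := Finset.inf'_le _ (Finset.mem_univ _)
    rcases max_cases (-g (p i.castSucc)) (-g (p i.succ)) with ⟨heq, _⟩ | ⟨heq, _⟩ <;>
      rw [heq] at hup <;> linarith
  · have hup :=
      aux_upper a b C d hC g g' g'' hg' hg'' hbound
        (p i.castSucc) (p i.succ) x (hmem _) (hmem _) hui hiv (hgap i)
    have hsup1 : g (p i.castSucc)
        ≤ Finset.univ.sup' Finset.univ_nonempty (fun j : Fin (M + 1) => g (p j)) :=
      Finset.le_sup' (fun j : Fin (M + 1) => g (p j)) (Finset.mem_univ i.castSucc)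
    have hsup2 : g (p i.succ)
        ≤ Finset.univ.sup' Finset.univ_nonempty (fun j : Fin (M + 1) => g (p j)) :=
      Finset.le_sup' (fun j : Fin (M + 1) => g (p j)) (Finset.mem_univ i.succ)
    rcases max_cases (g (p i.castSucc)) (g (p i.succ)) with ⟨heq, _⟩ | ⟨heq, _⟩ <;>
      rw [heq] at hup <;> linarith
end

section
/- Let M ≥ 1 and let a_0, …, a_M be real numbers with P(t) = Σ_{k=0}^{M} a_k t^k, and define the Bernstein coefficients b_j = Σ_{k=0}^{j} a_k · C(j,k)/C(M,k) for j = 0, …, M, where C(n,k) denotes the binomial coefficient. Let d be the maximal gap between consecutive elements of the b_j when sorted in increasing order, and let g : ℝ → ℝ be twice differentiable on [min_j b_j, max_j b_j] with |g''(x)| ≤ C there. Then for every t ∈ [0,1], (min_{0 ≤ j ≤ M} g(b_j)) − C·d²/2 ≤ g(P(t)) ≤ (max_{0 ≤ j ≤ M} g(b_j)) + C·d²/2. -/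
open Set

lemma bern_sum (M : ℕ) (t : ℝ) :
    ∑ j ∈ Finset.range (M + 1), (M.choose j : ℝ) * t ^ j * (1 - t) ^ (M - j) = 1 := by
  have h := add_pow t (1 - t) M
  have h1 : t + (1 - t) = 1 := by ring
  rw [h1, one_pow] at h
  calc ∑ j ∈ Finset.range (M + 1), (M.choose j : ℝ) * t ^ j * (1 - t) ^ (M - j)
      = ∑ j ∈ Finset.range (M + 1), t ^ j * (1 - t) ^ (M - j) * (M.choose j : ℝ) :=
        Finset.sum_congr rfl (fun j _ => by ring)
    _ = 1 := h.symm

lemma bern_choose (M k : ℕ) (hk : k ≤ M) (t : ℝ) :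
    ∑ j ∈ Finset.range (M + 1),
      (j.choose k : ℝ) * ((M.choose j : ℝ) * t ^ j * (1 - t) ^ (M - j))
    = (M.choose k : ℝ) * t ^ k := by
  have hsub : Finset.Ico k (M + 1) ⊆ Finset.range (M + 1) := by
    intro j hj
    simp only [Finset.mem_Ico] at hj
    exact Finset.mem_range.mpr hj.2
  rw [← Finset.sum_subset hsub (fun j hj hjn => by
    have : j < k := by
      simp only [Finset.mem_range] at hj
      simp only [Finset.mem_Ico, not_and, not_lt] at hjn
      by_contra hcon
      exact absurd hj (by omega)
    simp [Nat.choose_eq_zero_of_lt this])]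
  rw [Finset.sum_Ico_eq_sum_range]
  have hM1 : M + 1 - k = (M - k) + 1 := by omega
  rw [hM1]
  have hterm : ∀ i ∈ Finset.range ((M - k) + 1),
      ((k + i).choose k : ℝ) * ((M.choose (k + i) : ℝ) * t ^ (k + i) * (1 - t) ^ (M - (k + i)))
      = (M.choose k : ℝ) * t ^ k *
        (((M - k).choose i : ℝ) * t ^ i * (1 - t) ^ ((M - k) - i)) := by
    intro i hi
    have hiM : i ≤ M - k := by simpa [Nat.lt_succ_iff] using hi
    have hki : k + i ≤ M := by omega
    have hcc : M.choose (k + i) * (k + i).choose k = M.choose k * (M - k).choose i := by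
      have := Nat.choose_mul (n := M) (Nat.le_add_right k i)
      simpa using this
    have hcast : (M.choose (k + i) : ℝ) * ((k + i).choose k : ℝ)
        = (M.choose k : ℝ) * ((M - k).choose i : ℝ) := by exact_mod_cast congrArg Nat.cast hcc
    have hsub2 : M - (k + i) = (M - k) - i := by omega
    rw [hsub2, pow_add]
    linear_combination (t ^ k * t ^ i * (1 - t) ^ ((M - k) - i)) * hcast
  rw [Finset.sum_congr rfl hterm, ← Finset.mul_sum, bern_sum (M - k) t, mul_one]

lemma bern_rep (M : ℕ) (a : ℕ → ℝ) (b : Fin (M + 1) → ℝ)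
    (hb : ∀ j : Fin (M + 1), b j = ∑ k ∈ Finset.range ((j : ℕ) + 1),
      a k * (((j : ℕ).choose k : ℝ) / (M.choose k : ℝ))) (t : ℝ) :
    ∑ k ∈ Finset.range (M + 1), a k * t ^ k
      = ∑ j : Fin (M + 1), b j *
          ((M.choose (j : ℕ) : ℝ) * t ^ (j : ℕ) * (1 - t) ^ (M - (j : ℕ))) := by
  have hrw : ∀ j : Fin (M + 1), b j *
        ((M.choose (j : ℕ) : ℝ) * t ^ (j : ℕ) * (1 - t) ^ (M - (j : ℕ)))
      = (fun n : ℕ => (∑ k ∈ Finset.range (M + 1), a k * ((n.choose k : ℝ) / (M.choose k : ℝ))) *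
          ((M.choose n : ℝ) * t ^ n * (1 - t) ^ (M - n))) (j : ℕ) := by
    intro j
    simp only
    congr 1
    rw [hb j]
    refine Finset.sum_subset (Finset.range_subset_range.mpr (by omega : (j:ℕ) + 1 ≤ M + 1)) ?_
    intro k hk hkn
    have : (j : ℕ) < k := by
      simp only [Finset.mem_range, not_lt] at hkn ⊢
      omega
    simp [Nat.choose_eq_zero_of_lt this]
  have h1 : (∑ j : Fin (M + 1), b j *
        ((M.choose (j : ℕ) : ℝ) * t ^ (j : ℕ) * (1 - t) ^ (M - (j : ℕ))))
      = ∑ n ∈ Finset.range (M + 1),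
          (∑ k ∈ Finset.range (M + 1), a k * ((n.choose k : ℝ) / (M.choose k : ℝ))) *
            ((M.choose n : ℝ) * t ^ n * (1 - t) ^ (M - n)) := by
    rw [← Fin.sum_univ_eq_sum_range (fun n : ℕ =>
      (∑ k ∈ Finset.range (M + 1), a k * ((n.choose k : ℝ) / (M.choose k : ℝ))) *
        ((M.choose n : ℝ) * t ^ n * (1 - t) ^ (M - n))) (M + 1)]
    exact Finset.sum_congr rfl (fun j _ => hrw j)
  rw [h1]
  have h2 : ∀ n ∈ Finset.range (M + 1),
      (∑ k ∈ Finset.range (M + 1), a k * ((n.choose k : ℝ) / (M.choose k : ℝ))) *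
        ((M.choose n : ℝ) * t ^ n * (1 - t) ^ (M - n))
      = ∑ k ∈ Finset.range (M + 1), (a k / (M.choose k : ℝ)) *
          ((n.choose k : ℝ) * ((M.choose n : ℝ) * t ^ n * (1 - t) ^ (M - n))) := by
    intro n _
    rw [Finset.sum_mul]
    exact Finset.sum_congr rfl (fun k _ => by ring)
  rw [Finset.sum_congr rfl h2, Finset.sum_comm]
  refine (Finset.sum_congr rfl (fun k hk => ?_)).symm
  rw [← Finset.mul_sum, bern_choose M k (by simpa [Nat.lt_succ_iff] using hk) t]
  have hMk : (M.choose k : ℝ) ≠ 0 :=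
    Nat.cast_ne_zero.mpr (Nat.choose_pos (by simpa [Nat.lt_succ_iff] using hk)).ne'
  field_simp

open Set

lemma taylor_aux {g g' g'' : ℝ → ℝ} {lo hi C : ℝ}
    (hg' : ∀ x ∈ Icc lo hi, HasDerivWithinAt g (g' x) (Icc lo hi) x)
    (hg'' : ∀ x ∈ Icc lo hi, HasDerivWithinAt g' (g'' x) (Icc lo hi) x)
    (hbound : ∀ x ∈ Icc lo hi, |g'' x| ≤ C)
    {x e : ℝ} (hx : x ∈ Icc lo hi) (he : e ∈ Icc lo hi) :
    |g e - g x - g' x * (e - x)| ≤ C * (e - x) ^ 2 := by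
  have hlip : ∀ y ∈ Icc lo hi, |g' y - g' x| ≤ C * |y - x| := by
    intro y hy
    have := (convex_Icc lo hi).norm_image_sub_le_of_norm_hasDerivWithin_le hg''
      (fun z hz => by simpa using hbound z hz) hx hy
    simpa [Real.norm_eq_abs] using this
  set s' : Set ℝ := Icc (min x e) (max x e) with hs'
  have hsub : s' ⊆ Icc lo hi := by
    apply Icc_subset_Icc
    · exact le_min hx.1 he.1
    · exact max_le hx.2 he.2
  have hxs : x ∈ s' := ⟨min_le_left _ _, le_max_left _ _⟩
  have hes : e ∈ s' := ⟨min_le_right _ _, le_max_right _ _⟩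
  have hderiv : ∀ y ∈ s', HasDerivWithinAt (fun z => g z - g' x * z) (g' y - g' x) s' y := by
    intro y hy
    have h1 := ((hg' y (hsub hy)).sub ((hasDerivWithinAt_id y _).const_mul (g' x))).mono hsub
    have h2 : g' y - g' x = g' y - g' x * 1 := by ring
    rw [h2]; exact h1
  have hb : ∀ y ∈ s', ‖g' y - g' x‖ ≤ C * |e - x| := by
    intro y hy
    refine (by simpa [Real.norm_eq_abs] using hlip y (hsub hy) : |g' y - g' x| ≤ C * |y - x|).trans ?_
    have hC : 0 ≤ C := (abs_nonneg _).trans (hbound x hx)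
    have : |y - x| ≤ |e - x| := by
      rcases le_total x e with h | h
      · simp only [hs', min_eq_left h, max_eq_right h] at hy
        rw [abs_of_nonneg (by linarith [hy.1]), abs_of_nonneg (by linarith)]
        linarith [hy.2]
      · simp only [hs', min_eq_right h, max_eq_left h] at hy
        rw [abs_of_nonpos (by linarith [hy.2]), abs_of_nonpos (by linarith)]
        linarith [hy.1]
    nlinarith
  have := (convex_Icc _ _).norm_image_sub_le_of_norm_hasDerivWithin_le hderiv hb hxs hes
  calc |g e - g x - g' x * (e - x)|
      = ‖(g e - g' x * e) - (g x - g' x * x)‖ := by rw [Real.norm_eq_abs]; ring_nf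
    _ ≤ C * |e - x| * ‖e - x‖ := this
    _ = C * (e - x) ^ 2 := by rw [Real.norm_eq_abs, mul_assoc, abs_mul_abs_self]; ring

lemma key_aux {g g' g'' : ℝ → ℝ} {lo hi C : ℝ} (hC : 0 ≤ C)
    (hg' : ∀ x ∈ Icc lo hi, HasDerivWithinAt g (g' x) (Icc lo hi) x)
    (hg'' : ∀ x ∈ Icc lo hi, HasDerivWithinAt g' (g'' x) (Icc lo hi) x)
    (hbound : ∀ x ∈ Icc lo hi, |g'' x| ≤ C)
    {p q x : ℝ} (hp : p ∈ Icc lo hi) (hq : q ∈ Icc lo hi) (hpx : p ≤ x) (hxq : x ≤ q) :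
    min (g p) (g q) - C * (q - p) ^ 2 / 4 ≤ g x ∧
      g x ≤ max (g p) (g q) + C * (q - p) ^ 2 / 4 := by
  have hx : x ∈ Icc lo hi := ⟨hp.1.trans hpx, hxq.trans hq.2⟩
  obtain ⟨u, hu'⟩ : ∃ u, u = x - p := ⟨_, rfl⟩
  obtain ⟨v, hv'⟩ : ∃ v, v = q - x := ⟨_, rfl⟩
  have hu : 0 ≤ u := by rw [hu']; linarith
  have hv : 0 ≤ v := by rw [hv']; linarith
  have hA := abs_le.mp (taylor_aux hg' hg'' hbound hx hp)
  have hB := abs_le.mp (taylor_aux hg' hg'' hbound hx hq)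
  have hpu : p - x = -u := by rw [hu']; ring
  have hqv : q - x = v := by rw [hv']
  rw [hpu] at hA
  rw [hqv] at hB
  have hA1 : -(C * u ^ 2) ≤ g p - g x + g' x * u := by nlinarith [hA.1]
  have hA2 : g p - g x + g' x * u ≤ C * u ^ 2 := by nlinarith [hA.2]
  have hB1 : -(C * v ^ 2) ≤ g q - g x - g' x * v := by nlinarith [hB.1]
  have hB2 : g q - g x - g' x * v ≤ C * v ^ 2 := by nlinarith [hB.2]
  have hqp : q - p = u + v := by rw [hu', hv']; ring
  rcases eq_or_lt_of_le (by linarith : (0:ℝ) ≤ u + v) with h0 | h0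
  · have hu0 : u = 0 := by linarith
    have hv0 : v = 0 := by linarith
    have hxp : x = p := by rw [hu'] at hu0; linarith
    have hCnn : 0 ≤ C * (q - p) ^ 2 / 4 := by positivity
    subst hxp
    exact ⟨by linarith [min_le_left (g x) (g q)], by linarith [le_max_left (g x) (g q)]⟩
  have huv : C * u * v * (u + v) ≤ (u + v) * (C * (u + v) ^ 2 / 4) := by
    nlinarith [mul_nonneg (mul_nonneg hC (by linarith : (0:ℝ) ≤ u + v)) (sq_nonneg (u - v))]
  have keyid : (u + v) * g x = v * (g p - g x + g' x * u) + u * (g q - g x - g' x * v)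
      - v * g p - u * g q + (u + v) * g x + v * g p + u * g q
      - v * (g p - g x + g' x * u) - u * (g q - g x - g' x * v) := by ring
  have expand : (u + v) * g x
      = v * g p + u * g q - (v * (g p - g x + g' x * u) + u * (g q - g x - g' x * v)) := by ring
  constructor
  · have hm1 := mul_le_mul_of_nonneg_left (min_le_left (g p) (g q)) hv
    have hm2 := mul_le_mul_of_nonneg_left (min_le_right (g p) (g q)) hu
    have t2 : v * (g p - g x + g' x * u) + u * (g q - g x - g' x * v) ≤ C * u * v * (u + v) := by
      have h := add_le_add (mul_le_mul_of_nonneg_left hA2 hv) (mul_le_mul_of_nonneg_left hB2 hu)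
      have e1 : v * (C * u ^ 2) + u * (C * v ^ 2) = C * u * v * (u + v) := by ring
      linarith [h, e1]
    have : (u + v) * (min (g p) (g q) - C * (q - p) ^ 2 / 4) ≤ (u + v) * g x := by
      rw [hqp, expand]
      have hid : (u + v) * (min (g p) (g q) - C * (u + v) ^ 2 / 4)
          = v * min (g p) (g q) + u * min (g p) (g q) - (u + v) * (C * (u + v) ^ 2 / 4) := by ring
      linarith [hm1, hm2, t2, huv, hid]
    exact le_of_mul_le_mul_left this h0
  · have hm1 := mul_le_mul_of_nonneg_left (le_max_left (g p) (g q)) hv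
    have hm2 := mul_le_mul_of_nonneg_left (le_max_right (g p) (g q)) hu
    have t1 : -(C * u * v * (u + v)) ≤ v * (g p - g x + g' x * u) + u * (g q - g x - g' x * v) := by
      have h := add_le_add (mul_le_mul_of_nonneg_left hA1 hv) (mul_le_mul_of_nonneg_left hB1 hu)
      have e1 : v * -(C * u ^ 2) + u * -(C * v ^ 2) = -(C * u * v * (u + v)) := by ring
      linarith [h, e1]
    have : (u + v) * g x ≤ (u + v) * (max (g p) (g q) + C * (q - p) ^ 2 / 4) := by
      rw [hqp, expand]
      have hid : (u + v) * (max (g p) (g q) + C * (u + v) ^ 2 / 4)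
          = v * max (g p) (g q) + u * max (g p) (g q) + (u + v) * (C * (u + v) ^ 2 / 4) := by ring
      linarith [hm1, hm2, t1, huv, hid]
    exact le_of_mul_le_mul_left this h0

/-- Paper's Theorem 1: a twice-differentiable constraint `g` evaluated along the
polynomial trajectory `P(t) = Σ aₖ tᵏ` over `[0,1]` is enclosed between the extrema of
`g` over the Bernstein coefficients `bⱼ` of `P`, enlarged by `C·d²/2`, where `d` is the
maximal gap between consecutive sorted Bernstein coefficients and `|g''| ≤ C` on
`[min bⱼ, max bⱼ]`. -/
theorem stmt_1 (M : ℕ) (hM : 1 ≤ M) (a : ℕ → ℝ) (b : Fin (M + 1) → ℝ)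
    (hb : ∀ j : Fin (M + 1), b j = ∑ k ∈ Finset.range ((j : ℕ) + 1),
      a k * (((j : ℕ).choose k : ℝ) / (M.choose k : ℝ)))
    (σ : Equiv.Perm (Fin (M + 1))) (hσ : Monotone (fun i => b (σ i)))
    (d : ℝ)
    (hd : d = Finset.univ.sup' (Finset.univ_nonempty_iff.mpr ⟨⟨0, hM⟩⟩)
      (fun i : Fin M => b (σ i.succ) - b (σ i.castSucc)))
    (C : ℝ) (hC : 0 ≤ C) (g g' g'' : ℝ → ℝ)
    (lo hi : ℝ)
    (hlo : lo = Finset.univ.inf' Finset.univ_nonempty b)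
    (hhi : hi = Finset.univ.sup' Finset.univ_nonempty b)
    (hg' : ∀ x ∈ Set.Icc lo hi, HasDerivWithinAt g (g' x) (Set.Icc lo hi) x)
    (hg'' : ∀ x ∈ Set.Icc lo hi, HasDerivWithinAt g' (g'' x) (Set.Icc lo hi) x)
    (hbound : ∀ x ∈ Set.Icc lo hi, |g'' x| ≤ C) :
    ∀ t ∈ Set.Icc (0 : ℝ) 1,
      (Finset.univ.inf' Finset.univ_nonempty (fun j : Fin (M + 1) => g (b j)))
          - C * d ^ 2 / 2 ≤ g (∑ k ∈ Finset.range (M + 1), a k * t ^ k) ∧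
      g (∑ k ∈ Finset.range (M + 1), a k * t ^ k)
          ≤ (Finset.univ.sup' Finset.univ_nonempty (fun j : Fin (M + 1) => g (b j)))
              + C * d ^ 2 / 2 := by
  intro t ht
  obtain ⟨ht0, ht1⟩ := ht
  obtain ⟨x, hxdef⟩ : ∃ x, x = ∑ k ∈ Finset.range (M + 1), a k * t ^ k := ⟨_, rfl⟩
  rw [← hxdef]
  have hBnn : ∀ n : ℕ, 0 ≤ (M.choose n : ℝ) * t ^ n * (1 - t) ^ (M - n) := fun n =>
    mul_nonneg (mul_nonneg (Nat.cast_nonneg _) (pow_nonneg ht0 _)) (pow_nonneg (by linarith) _)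
  have hBsum : ∑ j : Fin (M + 1),
      (M.choose (j : ℕ) : ℝ) * t ^ (j : ℕ) * (1 - t) ^ (M - (j : ℕ)) = 1 := by
    rw [Fin.sum_univ_eq_sum_range (fun n : ℕ => (M.choose n : ℝ) * t ^ n * (1 - t) ^ (M - n))]
    exact bern_sum M t
  have hxrep : x = ∑ j : Fin (M + 1), b j *
      ((M.choose (j : ℕ) : ℝ) * t ^ (j : ℕ) * (1 - t) ^ (M - (j : ℕ))) :=
    hxdef.trans (bern_rep M a b hb t)
  have hlox : lo ≤ x := by
    have h1 : ∑ j : Fin (M + 1), lo *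
        ((M.choose (j : ℕ) : ℝ) * t ^ (j : ℕ) * (1 - t) ^ (M - (j : ℕ)))
        ≤ ∑ j : Fin (M + 1), b j *
        ((M.choose (j : ℕ) : ℝ) * t ^ (j : ℕ) * (1 - t) ^ (M - (j : ℕ))) := by
      refine Finset.sum_le_sum (fun j _ => ?_)
      exact mul_le_mul_of_nonneg_right (hlo ▸ Finset.inf'_le b (Finset.mem_univ j)) (hBnn _)
    rw [← Finset.mul_sum, hBsum, mul_one] at h1
    linarith [hxrep ▸ h1]
  have hxhi : x ≤ hi := by
    have h1 : ∑ j : Fin (M + 1), b j *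
        ((M.choose (j : ℕ) : ℝ) * t ^ (j : ℕ) * (1 - t) ^ (M - (j : ℕ)))
        ≤ ∑ j : Fin (M + 1), hi *
        ((M.choose (j : ℕ) : ℝ) * t ^ (j : ℕ) * (1 - t) ^ (M - (j : ℕ))) := by
      refine Finset.sum_le_sum (fun j _ => ?_)
      exact mul_le_mul_of_nonneg_right (hhi ▸ Finset.le_sup' b (Finset.mem_univ j)) (hBnn _)
    rw [← Finset.mul_sum, hBsum, mul_one] at h1
    linarith [hxrep ▸ h1]
  obtain ⟨c, hcdef⟩ : ∃ c : Fin (M + 1) → ℝ, c = fun i => b (σ i) := ⟨_, rfl⟩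
  have hcmono : Monotone c := hcdef ▸ hσ
  have hcb : ∀ i, c i = b (σ i) := fun i => by rw [hcdef]
  have hc0 : c 0 = lo := by
    refine le_antisymm ?_ ?_
    · rw [hlo]
      refine Finset.le_inf' _ _ (fun j _ => ?_)
      have := hcmono (Fin.zero_le (σ.symm j))
      rw [hcb, hcb, Equiv.apply_symm_apply] at this
      rw [hcb]; exact this
    · rw [hlo, hcb]; exact Finset.inf'_le b (Finset.mem_univ _)
  have hclast : c (Fin.last M) = hi := by
    refine le_antisymm ?_ ?_
    · rw [hhi, hcb]; exact Finset.le_sup' b (Finset.mem_univ _)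
    · rw [hhi]
      refine Finset.sup'_le _ _ (fun j _ => ?_)
      have := hcmono (Fin.le_last (σ.symm j))
      rw [hcb, hcb, Equiv.apply_symm_apply] at this
      rw [hcb]; exact this
  have hd0 : 0 ≤ d := by
    rw [hd]
    refine le_trans ?_ (Finset.le_sup' _ (Finset.mem_univ (⟨0, hM⟩ : Fin M)))
    have := hcmono (Fin.castSucc_le_succ (⟨0, hM⟩ : Fin M))
    rw [hcb, hcb] at this
    linarith
  have hslack : 0 ≤ C * d ^ 2 / 2 := by positivity
  obtain ⟨S, hSdef⟩ : ∃ S : Finset (Fin (M + 1)),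
      S = Finset.univ.filter (fun i => c i ≤ x) := ⟨_, rfl⟩
  have hS : S.Nonempty := by
    refine ⟨0, ?_⟩
    rw [hSdef]
    simp only [Finset.mem_filter, Finset.mem_univ, true_and]
    rw [hc0]
    exact hlox
  obtain ⟨j, hjdef⟩ : ∃ j, j = S.max' hS := ⟨_, rfl⟩
  have hcjx : c j ≤ x := by
    have hmem : j ∈ Finset.filter (fun i => c i ≤ x) Finset.univ := by
      rw [← hSdef, hjdef]
      exact S.max'_mem hS
    exact (Finset.mem_filter.mp hmem).2
  by_cases hjl : j = Fin.last M
  · have hxval : x = c (Fin.last M) := le_antisymm (hclast ▸ hxhi) (hjl ▸ hcjx)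
    rw [hxval, hcb]
    constructor
    · have := Finset.inf'_le (fun j : Fin (M + 1) => g (b j))
        (Finset.mem_univ (σ (Fin.last M)))
      linarith
    · have := Finset.le_sup' (fun j : Fin (M + 1) => g (b j))
        (Finset.mem_univ (σ (Fin.last M)))
      linarith
  · have hjlt : (j : ℕ) < M := by
      have h1 := Fin.le_last j
      rcases lt_or_eq_of_le h1 with h | h
      · exact by omega
      · exact absurd h hjl
    obtain ⟨i, hidef⟩ : ∃ i : Fin M, i = ⟨(j : ℕ), hjlt⟩ := ⟨_, rfl⟩
    have hicast : i.castSucc = j := by rw [hidef]; ext; simp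
    have hnot : ¬ c i.succ ≤ x := by
      intro hcon
      have hmem : i.succ ∈ S := by
        rw [hSdef]
        simp only [Finset.mem_filter, Finset.mem_univ, true_and]
        exact hcon
      have h2 := Finset.le_max' S i.succ hmem
      rw [← hjdef] at h2
      have hlt : (j : ℕ) < (i.succ : ℕ) := by rw [hidef]; simp
      have h3 : (i.succ : ℕ) ≤ (j : ℕ) := h2
      omega
    have hxq : x ≤ c i.succ := le_of_lt (lt_of_not_ge hnot)
    have hpmem : c i.castSucc ∈ Set.Icc lo hi :=
      ⟨hc0 ▸ hcmono (Fin.zero_le _), hclast ▸ hcmono (Fin.le_last _)⟩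
    have hqmem : c i.succ ∈ Set.Icc lo hi :=
      ⟨hc0 ▸ hcmono (Fin.zero_le _), hclast ▸ hcmono (Fin.le_last _)⟩
    have hpx : c i.castSucc ≤ x := hicast ▸ hcjx
    have hkey := key_aux hC hg' hg'' hbound hpmem hqmem hpx hxq
    have hgap : c i.succ - c i.castSucc ≤ d := by
      rw [hd, hcb, hcb]
      exact Finset.le_sup' (fun i : Fin M => b (σ i.succ) - b (σ i.castSucc))
        (Finset.mem_univ i)
    have hgap0 : 0 ≤ c i.succ - c i.castSucc := by
      have := hcmono (Fin.castSucc_le_succ i); linarith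
    have hsq : (c i.succ - c i.castSucc) ^ 2 ≤ d ^ 2 := by nlinarith
    have hCd : C * (c i.succ - c i.castSucc) ^ 2 / 4 ≤ C * d ^ 2 / 2 := by nlinarith
    have hinf1 := Finset.inf'_le (fun j : Fin (M + 1) => g (b j))
      (Finset.mem_univ (σ i.castSucc))
    have hinf2 := Finset.inf'_le (fun j : Fin (M + 1) => g (b j))
      (Finset.mem_univ (σ i.succ))
    have hsup1 := Finset.le_sup' (fun j : Fin (M + 1) => g (b j))
      (Finset.mem_univ (σ i.castSucc))
    have hsup2 := Finset.le_sup' (fun j : Fin (M + 1) => g (b j))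
      (Finset.mem_univ (σ i.succ))
    rw [← hcb] at hinf1 hinf2 hsup1 hsup2
    constructor
    · have hmin := le_min hinf1 hinf2
      linarith [hkey.1]
    · have hmax := max_le hsup1 hsup2
      linarith [hkey.2]
end

section
/- Let a ≤ b be real numbers, let C ≥ 0, and let g : ℝ → ℝ be twice differentiable on [a,b] with |g''(x)| ≤ C for all x ∈ [a,b]. For every integer m ≥ 1, let p_i = a + i·(b−a)/m for i = 0, …, m be the uniform grid on [a,b]. Then 0 ≤ (sup_{x ∈ [a,b]} g(x)) − (max_{0 ≤ i ≤ m} g(p_i)) ≤ C·(b−a)²/(2m²). In particular, the error of the regional extrema approximation decreases proportionally to 1/m² as the number of regions m increases. -/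
lemma aux_key (a b C : ℝ) (g g' g'' : ℝ → ℝ)
    (hg' : ∀ x ∈ Set.Icc a b, HasDerivWithinAt g (g' x) (Set.Icc a b) x)
    (hg'' : ∀ x ∈ Set.Icc a b, HasDerivWithinAt g' (g'' x) (Set.Icc a b) x)
    (hbound : ∀ x ∈ Set.Icc a b, |g'' x| ≤ C)
    (x p : ℝ) (hx : x ∈ Set.Icc a b) (hp : p ∈ Set.Icc a b) (hx0 : g' x = 0) :
    |g p - g x| ≤ C * (p - x) ^ 2 := by
  have hsub : Set.uIcc x p ⊆ Set.Icc a b := Set.uIcc_subset_Icc hx hp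
  have hconv : Convex ℝ (Set.uIcc x p) := convex_uIcc x p
  have hxs : x ∈ Set.uIcc x p := Set.left_mem_uIcc
  have hps : p ∈ Set.uIcc x p := Set.right_mem_uIcc
  -- step 1 : |g' t| ≤ C * |p - x| on uIcc x p
  have hstep1 : ∀ t ∈ Set.uIcc x p, ‖g' t‖ ≤ C * |p - x| := by
    intro t ht
    have h1 : ‖g' t - g' x‖ ≤ C * ‖t - x‖ :=
      hconv.norm_image_sub_le_of_norm_hasDerivWithin_le
        (fun y hy => (hg'' y (hsub hy)).mono hsub)
        (fun y hy => hbound y (hsub hy)) hxs ht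
    have h2 : |t - x| ≤ |p - x| := by
      rcases Set.mem_uIcc.1 ht with ⟨h, h'⟩ | ⟨h, h'⟩ <;>
        rcases Set.mem_uIcc.1 hps with _ | _ <;> rw [abs_sub_comm t x, abs_sub_comm p x] <;>
        cases abs_cases (x - t) <;> cases abs_cases (x - p) <;> nlinarith
    have hC : 0 ≤ C := le_trans (abs_nonneg _) (hbound x hx)
    calc ‖g' t‖ = ‖g' t - g' x‖ := by rw [hx0, sub_zero]
    _ ≤ C * ‖t - x‖ := h1
    _ ≤ C * |p - x| := by
        rw [Real.norm_eq_abs]; exact mul_le_mul_of_nonneg_left h2 hC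
  have hstep2 : ‖g p - g x‖ ≤ (C * |p - x|) * ‖p - x‖ :=
    hconv.norm_image_sub_le_of_norm_hasDerivWithin_le
      (fun y hy => (hg' y (hsub hy)).mono hsub) hstep1 hxs hps
  calc |g p - g x| ≤ (C * |p - x|) * |p - x| := hstep2
  _ = C * (p - x) ^ 2 := by rw [mul_assoc, ← abs_mul, ← sq, abs_sq]

/-- Paper's Proposition 1: the error of the regional extrema approximation on a uniform
grid of `m+1` points over `[a,b]`, for a twice-differentiable `g` with `|g''| ≤ C`,
is between `0` and `C·(b−a)²/(2m²)`. -/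
theorem stmt_2 (a b C : ℝ) (hab : a ≤ b) (hC : 0 ≤ C)
    (g g' g'' : ℝ → ℝ)
    (hg' : ∀ x ∈ Set.Icc a b, HasDerivWithinAt g (g' x) (Set.Icc a b) x)
    (hg'' : ∀ x ∈ Set.Icc a b, HasDerivWithinAt g' (g'' x) (Set.Icc a b) x)
    (hbound : ∀ x ∈ Set.Icc a b, |g'' x| ≤ C)
    (m : ℕ) (hm : 1 ≤ m) :
    0 ≤ sSup (g '' Set.Icc a b)
        - Finset.univ.sup' Finset.univ_nonempty
            (fun i : Fin (m + 1) => g (a + (i : ℕ) * (b - a) / m)) ∧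
    sSup (g '' Set.Icc a b)
        - Finset.univ.sup' Finset.univ_nonempty
            (fun i : Fin (m + 1) => g (a + (i : ℕ) * (b - a) / m))
      ≤ C * (b - a) ^ 2 / (2 * (m : ℝ) ^ 2) := by
  have hm0 : (0:ℝ) < m := by exact_mod_cast hm
  have hPmem : ∀ i : Fin (m + 1), a + (i : ℕ) * (b - a) / m ∈ Set.Icc a b := by
    intro i
    have hi : ((i : ℕ) : ℝ) ≤ m := by exact_mod_cast Nat.lt_succ_iff.1 i.isLt
    have hi0 : (0:ℝ) ≤ (i : ℕ) := Nat.cast_nonneg _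
    have h0 : (0:ℝ) ≤ (i : ℕ) * (b - a) / m :=
      div_nonneg (mul_nonneg hi0 (by linarith)) hm0.le
    have h1 : ((i : ℕ) : ℝ) * (b - a) / m ≤ b - a := by
      rw [div_le_iff₀ hm0]; nlinarith
    constructor <;> linarith
  have hcont : ContinuousOn g (Set.Icc a b) := fun y hy => (hg' y hy).continuousWithinAt
  obtain ⟨x, hx, hmax⟩ := isCompact_Icc.exists_isMaxOn (Set.nonempty_Icc.2 hab) hcont
  have hmax' : ∀ y ∈ Set.Icc a b, g y ≤ g x := hmax
  have hsup : sSup (g '' Set.Icc a b) = g x := by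
    apply le_antisymm
    · exact csSup_le ((Set.nonempty_Icc.2 hab).image g)
        (by rintro _ ⟨y, hy, rfl⟩; exact hmax' y hy)
    · exact le_csSup ⟨g x, by rintro _ ⟨y, hy, rfl⟩; exact hmax' y hy⟩ ⟨x, hx, rfl⟩
  have hsup'le : Finset.univ.sup' Finset.univ_nonempty
      (fun i : Fin (m + 1) => g (a + (i : ℕ) * (b - a) / m)) ≤ g x :=
    Finset.sup'_le _ _ fun i _ => hmax' _ (hPmem i)
  rw [hsup]
  refine ⟨by linarith, ?_⟩
  -- suffices to find a grid point close enough
  suffices h : ∃ i : Fin (m + 1),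
      g x - g (a + (i : ℕ) * (b - a) / m) ≤ C * (b - a) ^ 2 / (2 * (m : ℝ) ^ 2) by
    obtain ⟨i, hi⟩ := h
    have : g (a + (i : ℕ) * (b - a) / m) ≤ Finset.univ.sup' Finset.univ_nonempty
        (fun i : Fin (m + 1) => g (a + (i : ℕ) * (b - a) / m)) :=
      Finset.le_sup' (fun i : Fin (m + 1) => g (a + (i : ℕ) * (b - a) / m))
        (Finset.mem_univ i)
    linarith
  rcases eq_or_lt_of_le hx.1 with hxa | hxa
  · refine ⟨0, ?_⟩
    have : a + ((0 : Fin (m+1)) : ℕ) * (b - a) / m = a := by simp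
    rw [this, ← hxa]
    have : 0 ≤ C * (b - a) ^ 2 / (2 * (m : ℝ) ^ 2) := by positivity
    linarith
  rcases eq_or_lt_of_le hx.2 with hxb | hxb
  · refine ⟨Fin.last m, ?_⟩
    have hml : ((Fin.last m : ℕ) : ℝ) = (m : ℝ) := by simp
    have : a + ((Fin.last m : ℕ) : ℝ) * (b - a) / m = b := by
      rw [hml]; field_simp; ring
    rw [this, hxb]
    have : 0 ≤ C * (b - a) ^ 2 / (2 * (m : ℝ) ^ 2) := by positivity
    linarith
  -- interior case
  have hab' : a < b := lt_trans hxa hxb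
  have hx0 : g' x = 0 := by
    have hnhds : Set.Icc a b ∈ nhds x := Icc_mem_nhds hxa hxb
    have hd : HasDerivAt g (g' x) x := (hg' x hx).hasDerivAt hnhds
    exact (IsMaxOn.isLocalMax hmax hnhds).hasDerivAt_eq_zero hd
  set r : ℝ := (x - a) * m / (b - a) with hr
  have hba : (0:ℝ) < b - a := by linarith
  have hr0 : 0 ≤ r := by
    rw [hr]; exact div_nonneg (mul_nonneg (by linarith [hx.1]) hm0.le) (by linarith)
  have hrm : r ≤ m := by
    rw [hr, div_le_iff₀ hba]
    nlinarith [hx.2]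
  set i₀ : ℕ := ⌊r + 1/2⌋₊ with hi₀
  have hi₀le : i₀ ≤ m := by
    have : r + 1/2 < (m : ℝ) + 1 := by linarith
    have := (Nat.floor_lt (by linarith : (0:ℝ) ≤ r + 1/2)).2 (by exact_mod_cast this)
    omega
  refine ⟨⟨i₀, by omega⟩, ?_⟩
  have hcast : ((⟨i₀, by omega⟩ : Fin (m+1)) : ℕ) = i₀ := rfl
  rw [hcast]
  set p : ℝ := a + (i₀ : ℝ) * (b - a) / m with hp
  have hclose : |r - (i₀:ℝ)| ≤ 1/2 := by
    have h1 : (i₀ : ℝ) ≤ r + 1/2 := Nat.floor_le (by linarith)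
    have h2 : r + 1/2 < (i₀ : ℝ) + 1 := Nat.lt_floor_add_one _
    rw [abs_le]; constructor <;> linarith
  have hxp : x - p = (r - i₀) * (b - a) / m := by
    rw [hp, hr]; field_simp; ring
  have hxpabs : |x - p| ≤ (b - a) / (2 * m) := by
    rw [hxp, abs_div, abs_mul, abs_of_pos hba, abs_of_pos hm0]
    rw [div_le_div_iff₀ hm0 (by positivity)]
    nlinarith [mul_nonneg (mul_nonneg (by linarith : (0:ℝ) ≤ 1/2 - |r - (i₀:ℝ)|) hba.le) hm0.le]
  have hkey := aux_key a b C g g' g'' hg' hg'' hbound x p hx (hPmem ⟨i₀, by omega⟩) hx0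
  have hsq : (p - x) ^ 2 ≤ ((b - a) / (2 * m)) ^ 2 := by
    rw [← sq_abs, abs_sub_comm]
    exact pow_le_pow_left₀ (abs_nonneg _) hxpabs 2
  have hfin : g x - g p ≤ C * ((b - a) / (2 * m)) ^ 2 := by
    have h1 : g x - g p ≤ |g p - g x| := by rw [abs_sub_comm]; exact le_abs_self _
    have h2 : C * (p - x) ^ 2 ≤ C * ((b - a) / (2 * m)) ^ 2 :=
      mul_le_mul_of_nonneg_left hsq hC
    exact le_trans h1 (le_trans hkey h2)
  have heq : C * ((b - a) / (2 * m)) ^ 2 = C * (b - a) ^ 2 / (4 * (m:ℝ) ^ 2) := by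
    rw [div_pow, show ((2:ℝ) * m) ^ 2 = 4 * (m:ℝ) ^ 2 by ring, mul_div_assoc]
  have hle : C * (b - a) ^ 2 / (4 * (m:ℝ) ^ 2) ≤ C * (b - a) ^ 2 / (2 * (m:ℝ) ^ 2) := by
    apply div_le_div_of_nonneg_left (by positivity) (by positivity)
    nlinarith
  linarith
end

section
/- Let M : ℕ and let a_0, …, a_M be real numbers, and define b_j = Σ_{k=0}^{j} a_k · C(j,k)/C(M,k) for j = 0, …, M, where C(n,k) denotes the binomial coefficient. Then, as polynomials over ℝ, Σ_{k=0}^{M} a_k X^k = Σ_{j=0}^{M} b_j · B_{M,j}(X), where B_{M,j}(X) = C(M,j) X^j (1−X)^{M−j} is the Bernstein basis polynomial of degree M and index j. -/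
open Polynomial

lemma bern_shift (M k i : ℕ) (h : k + i ≤ M) :
    C (((k + i).choose k : ℝ)) * bernsteinPolynomial ℝ M (k + i)
      = C ((M.choose k : ℝ)) * X ^ k * bernsteinPolynomial ℝ (M - k) i := by
  have hch : M.choose (k + i) * (k + i).choose k = M.choose k * (M - k).choose i := by
    simpa using Nat.choose_mul (n := M) (Nat.le_add_right k i)
  have hsub : M - (k + i) = M - k - i := by omega
  simp only [bernsteinPolynomial, hsub, ← Polynomial.C_eq_natCast]
  have this' : C ((M.choose (k+i) : ℝ)) * C (((k+i).choose k : ℝ))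
      = C ((M.choose k : ℝ)) * C (((M-k).choose i : ℝ)) := by
    rw [← map_mul, ← map_mul]
    congr 1
    exact_mod_cast congrArg (Nat.cast : ℕ → ℝ) hch
  rw [pow_add]
  linear_combination (X ^ k * X ^ i * (1 - X) ^ (M - k - i)) * this'

lemma key (M k : ℕ) (hk : k ≤ M) :
    ∑ j ∈ Finset.range (M + 1), C ((j.choose k : ℝ)) * bernsteinPolynomial ℝ M j
      = C ((M.choose k : ℝ)) * X ^ k := by
  rw [Finset.range_eq_Ico, ← Finset.sum_Ico_consecutive _ (Nat.zero_le k) (by omega : k ≤ M + 1)]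
  have h1 : ∑ j ∈ Finset.Ico 0 k, C ((j.choose k : ℝ)) * bernsteinPolynomial ℝ M j = 0 := by
    apply Finset.sum_eq_zero
    intro j hj
    simp only [Finset.mem_Ico] at hj
    rw [Nat.choose_eq_zero_of_lt hj.2]
    simp
  rw [h1, zero_add, Finset.sum_Ico_eq_sum_range]
  have h3 : ∀ i ∈ Finset.range (M + 1 - k),
      C (((k + i).choose k : ℝ)) * bernsteinPolynomial ℝ M (k + i)
        = C ((M.choose k : ℝ)) * X ^ k * bernsteinPolynomial ℝ (M - k) i := by
    intro i hi
    simp only [Finset.mem_range] at hi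
    exact bern_shift M k i (by omega)
  rw [Finset.sum_congr rfl h3, ← Finset.mul_sum,
    show M + 1 - k = (M - k) + 1 by omega, bernsteinPolynomial.sum, mul_one]

/-- Paper's equation (6) (Cargo–Shisha): with `bⱼ = Σ_{k≤j} aₖ·C(j,k)/C(M,k)`, the
polynomial `Σ aₖ Xᵏ` equals `Σ bⱼ·B_{M,j}(X)` in the Bernstein basis. -/
theorem stmt_6 (M : ℕ) (a b : ℕ → ℝ)
    (hb : ∀ j ≤ M, b j = ∑ k ∈ Finset.range (j + 1),
      a k * ((j.choose k : ℝ) / (M.choose k : ℝ))) :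
    ∑ k ∈ Finset.range (M + 1), C (a k) * X ^ k
      = ∑ j ∈ Finset.range (M + 1), C (b j) * bernsteinPolynomial ℝ M j := by
  have step : ∑ j ∈ Finset.range (M + 1), C (b j) * bernsteinPolynomial ℝ M j
      = ∑ j ∈ Finset.range (M + 1), ∑ k ∈ Finset.range (M + 1),
          C (a k / (M.choose k : ℝ)) * (C ((j.choose k : ℝ)) * bernsteinPolynomial ℝ M j) := by
    apply Finset.sum_congr rfl
    intro j hj
    simp only [Finset.mem_range] at hj
    have ext : ∑ k ∈ Finset.range (M + 1),
        C (a k / (M.choose k : ℝ)) * (C ((j.choose k : ℝ)) * bernsteinPolynomial ℝ M j)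
        = ∑ k ∈ Finset.range (j + 1),
        C (a k / (M.choose k : ℝ)) * (C ((j.choose k : ℝ)) * bernsteinPolynomial ℝ M j) := by
      symm
      apply Finset.sum_subset
      · exact Finset.range_subset_range.mpr (by omega)
      · intro x _ hx
        simp only [Finset.mem_range] at hx
        rw [show j.choose x = 0 from Nat.choose_eq_zero_of_lt (by omega)]
        simp
    rw [ext, hb j (by omega), map_sum, Finset.sum_mul]
    apply Finset.sum_congr rfl
    intro k _
    rw [show a k * ((j.choose k : ℝ) / (M.choose k : ℝ))
        = a k / (M.choose k : ℝ) * (j.choose k : ℝ) by ring, map_mul]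
    ring
  rw [step, Finset.sum_comm]
  apply Finset.sum_congr rfl
  intro k hk
  simp only [Finset.mem_range] at hk
  rw [← Finset.mul_sum, key M k (by omega), ← mul_assoc, ← map_mul]
  congr 2
  have : (M.choose k : ℝ) ≠ 0 := by
    exact_mod_cast Nat.choose_pos (by omega : k ≤ M) |>.ne'
  field_simp
end

section
/- Let M : ℕ and let P be a real polynomial of degree at most M with Bernstein coefficients b_0, …, b_M on [0,1] (i.e. P = Σ_{j=0}^{M} b_j B_{M,j}). Let 0 ≤ c < d ≤ 1 and let b'_0, …, b'_M be the Bernstein coefficients of P on the subinterval [c,d], i.e. the Bernstein coefficients on [0,1] of the polynomial Q(t) = P(c + (d−c)t). Then for every j, min_{0 ≤ i ≤ M} b_i ≤ b'_j ≤ max_{0 ≤ i ≤ M} b_i. -/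
open Polynomial

noncomputable def bsubCoef (M : ℕ) (c e : ℝ) (i j : ℕ) : ℝ :=
  ∑ p ∈ Finset.range (i + 1) ×ˢ Finset.range (M - i + 1),
    if p.1 + p.2 = j then
      (M.choose i : ℝ) * (i.choose p.1) * ((M - i).choose p.2) * e ^ p.1 * c ^ (i - p.1)
        * (1 - e) ^ p.2 * (1 - c) ^ (M - i - p.2) / (M.choose j)
    else 0

lemma bsubCoef_nonneg (M : ℕ) (c e : ℝ) (hc : 0 ≤ c) (hce : c ≤ e) (he : e ≤ 1) (i j : ℕ) :
    0 ≤ bsubCoef M c e i j := by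
  apply Finset.sum_nonneg
  intro p _
  split
  · have h0e : 0 ≤ e := hc.trans hce
    have h1e : 0 ≤ 1 - e := by linarith
    have h1c : 0 ≤ 1 - c := by linarith
    positivity
  · exact le_rfl

lemma key_eval (M i : ℕ) (hi : i ≤ M) (c e t : ℝ) :
    (M.choose i : ℝ) * (c + (e - c) * t) ^ i * (1 - (c + (e - c) * t)) ^ (M - i)
      = ∑ j ∈ Finset.range (M + 1),
          bsubCoef M c e i j * ((M.choose j : ℝ) * t ^ j * (1 - t) ^ (M - j)) := by
  -- rewrite RHS as a double sum
  simp only [bsubCoef, Finset.sum_mul]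
  rw [Finset.sum_comm]
  simp only [ite_mul, zero_mul]
  have hu : c + (e - c) * t = e * t + c * (1 - t) := by ring
  have hv : 1 - (c + (e - c) * t) = (1 - e) * t + (1 - c) * (1 - t) := by ring
  simp only [Finset.sum_ite_eq]
  rw [hv, hu, add_pow, add_pow]
  simp only [Finset.mul_sum, Finset.sum_mul]
  rw [Finset.sum_comm, ← Finset.sum_product']
  apply Finset.sum_congr rfl
  rintro ⟨k, l⟩ hp
  obtain ⟨hk, hl⟩ := Finset.mem_product.mp hp
  rw [Finset.mem_range] at hk hl
  have hk' : k ≤ i := by omega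
  have hl' : l ≤ M - i := by omega
  have hkl : k + l ≤ M := by omega
  rw [if_pos (Finset.mem_range.mpr (by omega))]
  have hch : ((M.choose (k + l) : ℝ)) ≠ 0 :=
    Nat.cast_ne_zero.mpr (Nat.choose_pos hkl).ne'
  have h2 : (1 - t) ^ (M - (k + l)) = (1 - t) ^ (i - k) * (1 - t) ^ (M - i - l) := by
    rw [← pow_add]; congr 1; omega
  rw [div_mul_eq_mul_div, eq_div_iff hch]
  simp only [mul_pow]
  rw [h2, pow_add]
  ring

lemma bern_comp (M i : ℕ) (hi : i ≤ M) (c e : ℝ) :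
    (bernsteinPolynomial ℝ M i).comp (C c + C (e - c) * X)
      = ∑ j ∈ Finset.range (M + 1), C (bsubCoef M c e i j) * bernsteinPolynomial ℝ M j := by
  apply Polynomial.funext
  intro t
  have := key_eval M i hi c e t
  simp only [bernsteinPolynomial, eval_comp, Polynomial.eval_finset_sum, eval_mul, eval_add,
    eval_pow, eval_sub, eval_one, eval_C, eval_X, eval_natCast]
  exact this

lemma bern_unique (M : ℕ) (g : ℕ → ℝ)
    (h : ∑ j ∈ Finset.range (M + 1), C (g j) * bernsteinPolynomial ℝ M j = 0) :
    ∀ j ≤ M, g j = 0 := by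
  set q : Polynomial ℝ := ∑ j ∈ Finset.range (M + 1), C (g j * (M.choose j)) * X ^ j with hqdef
  have hq : ∀ s : ℝ, s ≠ -1 → q.eval s = 0 := by
    intro s hs
    have h1s : (1 : ℝ) + s ≠ 0 := by intro hh; apply hs; linarith
    set t := s / (1 + s) with htdef
    have ht1 : 1 - t = 1 / (1 + s) := by rw [htdef]; field_simp; ring
    have h1t : (1 : ℝ) - t ≠ 0 := by rw [ht1]; exact one_div_ne_zero h1s
    have hts : t = s * (1 - t) := by rw [ht1, htdef, mul_one_div]
    have h0 := congrArg (Polynomial.eval t) h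
    simp only [Polynomial.eval_finset_sum, eval_mul, eval_C, bernsteinPolynomial, eval_pow,
      eval_sub, eval_one, eval_X, eval_zero, eval_natCast] at h0
    have expand : ∀ j ∈ Finset.range (M + 1),
        g j * ((M.choose j : ℝ) * t ^ j * (1 - t) ^ (M - j))
          = (g j * (M.choose j : ℝ) * s ^ j) * (1 - t) ^ M := by
      intro j hj
      rw [Finset.mem_range] at hj
      have hsplit : (1 - t) ^ M = (1 - t) ^ j * (1 - t) ^ (M - j) := by
        rw [← pow_add]; congr 1; omega
      have htj : t ^ j = s ^ j * (1 - t) ^ j := by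
        conv_lhs => rw [hts]
        exact mul_pow s (1 - t) j
      rw [htj, hsplit]; ring
    rw [Finset.sum_congr rfl expand, ← Finset.sum_mul] at h0
    have hsum0 : ∑ j ∈ Finset.range (M + 1), g j * (M.choose j : ℝ) * s ^ j = 0 := by
      rcases mul_eq_zero.mp h0 with h' | h'
      · exact h'
      · exact absurd h' (pow_ne_zero _ h1t)
    simpa [hqdef, Polynomial.eval_finset_sum] using hsum0
  have hq0 : q = 0 := by
    apply Polynomial.eq_zero_of_infinite_isRoot
    apply Set.Infinite.mono _ ((Set.finite_singleton (-1 : ℝ)).infinite_compl)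
    intro x hx
    exact hq x (by simpa using hx)
  intro j hj
  have hcoeff := congrArg (fun p => Polynomial.coeff p j) hq0
  simp only [hqdef, Polynomial.finset_sum_coeff, Polynomial.coeff_C_mul, Polynomial.coeff_X_pow,
    mul_ite, mul_one, mul_zero, Finset.sum_ite_eq, Finset.mem_range, coeff_zero] at hcoeff
  rw [if_pos (by omega)] at hcoeff
  have hch : ((M.choose j : ℝ)) ≠ 0 := Nat.cast_ne_zero.mpr (Nat.choose_pos hj).ne'
  exact (mul_eq_zero.mp hcoeff).resolve_right hch

/-- Subdivision property of Bernstein coefficients: if `P` (of degree at most `M`) has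
Bernstein coefficients `b` on `[0,1]` and `b'` on a subinterval `[c,e] ⊆ [0,1]`
(i.e. `b'` are the Bernstein coefficients of `Q(t) = P(c + (e−c)t)`), then every `b'ⱼ`
lies between the min and the max of the `bᵢ`. -/
theorem stmt_9 (M : ℕ) (P : Polynomial ℝ) (hP : P.natDegree ≤ M)
    (b b' : ℕ → ℝ) (c e : ℝ) (hc : 0 ≤ c) (hce : c < e) (he : e ≤ 1)
    (hPb : P = ∑ j ∈ Finset.range (M + 1), C (b j) * bernsteinPolynomial ℝ M j)
    (hQb : P.comp (C c + C (e - c) * X)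
      = ∑ j ∈ Finset.range (M + 1), C (b' j) * bernsteinPolynomial ℝ M j) :
    ∀ j ≤ M,
      (Finset.range (M + 1)).inf' (Finset.nonempty_range_iff.mpr (Nat.succ_ne_zero M)) b
        ≤ b' j ∧
      b' j ≤ (Finset.range (M + 1)).sup'
        (Finset.nonempty_range_iff.mpr (Nat.succ_ne_zero M)) b := by
  have hγnn : ∀ i j, 0 ≤ bsubCoef M c e i j :=
    fun i j => bsubCoef_nonneg M c e hc hce.le he i j
  set γ := bsubCoef M c e with hγdef
  set s : ℕ → ℝ := fun j => ∑ i ∈ Finset.range (M + 1), b i * γ i j with hsdef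
  -- P.comp aff in Bernstein basis
  have h1 : P.comp (C c + C (e - c) * X)
      = ∑ j ∈ Finset.range (M + 1), C (s j) * bernsteinPolynomial ℝ M j := by
    rw [hPb, Polynomial.sum_comp]
    calc ∑ i ∈ Finset.range (M + 1), (C (b i) * bernsteinPolynomial ℝ M i).comp (C c + C (e - c) * X)
        = ∑ i ∈ Finset.range (M + 1), ∑ j ∈ Finset.range (M + 1),
            C (b i) * (C (γ i j) * bernsteinPolynomial ℝ M j) := by
          apply Finset.sum_congr rfl
          intro i hi
          rw [Finset.mem_range] at hi
          rw [mul_comp, C_comp, bern_comp M i (by omega) c e, Finset.mul_sum]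
      _ = ∑ j ∈ Finset.range (M + 1), C (s j) * bernsteinPolynomial ℝ M j := by
          rw [Finset.sum_comm]
          apply Finset.sum_congr rfl
          intro j _
          rw [hsdef]
          simp only [map_sum, Finset.sum_mul, ← C_mul, ← mul_assoc]
  -- uniqueness: b' j = s j
  have hbs : ∀ j ≤ M, b' j = s j := by
    have h0 : ∑ j ∈ Finset.range (M + 1), C (b' j - s j) * bernsteinPolynomial ℝ M j = 0 := by
      simp only [map_sub, sub_mul, Finset.sum_sub_distrib, ← hQb, ← h1, sub_self]
    intro j hj
    have h' : b' j - s j = 0 := bern_unique M (fun j => b' j - s j) h0 j hj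
    linarith
  -- sum of coefficients is 1
  have hones : ∀ j ≤ M, ∑ i ∈ Finset.range (M + 1), γ i j = 1 := by
    have hA : ∑ i ∈ Finset.range (M + 1),
        (bernsteinPolynomial ℝ M i).comp (C c + C (e - c) * X)
        = ∑ j ∈ Finset.range (M + 1), C ((1 : ℝ)) * bernsteinPolynomial ℝ M j := by
      rw [← Polynomial.sum_comp, bernsteinPolynomial.sum, one_comp]
      simp [bernsteinPolynomial.sum]
    have hB : ∑ i ∈ Finset.range (M + 1),
        (bernsteinPolynomial ℝ M i).comp (C c + C (e - c) * X)
        = ∑ j ∈ Finset.range (M + 1),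
            C (∑ i ∈ Finset.range (M + 1), γ i j) * bernsteinPolynomial ℝ M j := by
      calc ∑ i ∈ Finset.range (M + 1),
          (bernsteinPolynomial ℝ M i).comp (C c + C (e - c) * X)
          = ∑ i ∈ Finset.range (M + 1), ∑ j ∈ Finset.range (M + 1),
              C (γ i j) * bernsteinPolynomial ℝ M j := by
            apply Finset.sum_congr rfl
            intro i hi
            rw [Finset.mem_range] at hi
            exact bern_comp M i (by omega) c e
        _ = _ := by
            rw [Finset.sum_comm]
            apply Finset.sum_congr rfl
            intro j _
            simp only [map_sum, Finset.sum_mul]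
    have h0 : ∑ j ∈ Finset.range (M + 1),
        C ((∑ i ∈ Finset.range (M + 1), γ i j) - 1) * bernsteinPolynomial ℝ M j = 0 := by
      simp only [map_sub, sub_mul, Finset.sum_sub_distrib, ← hB, ← hA, sub_self]
    intro j hj
    have h' : (∑ i ∈ Finset.range (M + 1), γ i j) - 1 = 0 :=
      bern_unique M (fun j => (∑ i ∈ Finset.range (M + 1), γ i j) - 1) h0 j hj
    linarith
  intro j hj
  have hbj : b' j = ∑ i ∈ Finset.range (M + 1), b i * γ i j := hbs j hj
  constructor
  · calc (Finset.range (M + 1)).inf' (Finset.nonempty_range_iff.mpr (Nat.succ_ne_zero M)) b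
        = ∑ i ∈ Finset.range (M + 1),
            (Finset.range (M + 1)).inf' (Finset.nonempty_range_iff.mpr (Nat.succ_ne_zero M)) b
              * γ i j := by
          rw [← Finset.mul_sum, hones j hj, mul_one]
      _ ≤ ∑ i ∈ Finset.range (M + 1), b i * γ i j :=
          Finset.sum_le_sum fun i hi =>
            mul_le_mul_of_nonneg_right (Finset.inf'_le b hi) (hγnn i j)
      _ = b' j := hbj.symm
  · calc b' j = ∑ i ∈ Finset.range (M + 1), b i * γ i j := hbj
      _ ≤ ∑ i ∈ Finset.range (M + 1),
            (Finset.range (M + 1)).sup' (Finset.nonempty_range_iff.mpr (Nat.succ_ne_zero M)) b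
              * γ i j :=
          Finset.sum_le_sum fun i hi =>
            mul_le_mul_of_nonneg_right (Finset.le_sup' b hi) (hγnn i j)
      _ = _ := by rw [← Finset.mul_sum, hones j hj, mul_one]
end

section
/- For every natural number k ≥ 1, the polynomial d^k/dx^k[(x² − 1)^k] (the k-fold derivative of (X² − 1)^k, which is the Legendre polynomial of degree k up to the positive factor 2^k k!) has k distinct real roots, all lying in the open interval (−1, 1). -/
open Polynomial

lemma aux_natDegree_iterate (p : Polynomial ℝ) (m : ℕ) (hm : m ≤ p.natDegree) :
    (derivative^[m] p).natDegree = p.natDegree - m := by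
  induction m with
  | zero => simp
  | succ m ih =>
    have hm' : m ≤ p.natDegree := Nat.le_of_succ_le hm
    have h1 : 0 < (derivative^[m] p).natDegree := by rw [ih hm']; omega
    rw [Function.iterate_succ_apply']
    have h2 := natDegree_eq_of_degree_eq_some (degree_derivative_eq (derivative^[m] p) h1)
    rw [h2, ih hm']; omega

/-- For `k ≥ 1`, the `k`-fold derivative of `(X² − 1)^k` (the Legendre polynomial of
degree `k` up to the positive factor `2^k k!`) has `k` distinct real roots, all lying
in the open interval `(−1, 1)`. -/
theorem stmt_15 (k : ℕ) (hk : 1 ≤ k) :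
    ∃ s : Finset ℝ, s.card = k ∧ ∀ x ∈ s, x ∈ Set.Ioo (-1 : ℝ) 1 ∧
      eval x ((fun p : Polynomial ℝ => derivative p)^[k] ((X ^ 2 - 1) ^ k)) = 0 := by
  set p : Polynomial ℝ := (X ^ 2 - 1) ^ k with hp
  have hdeg : p.natDegree = 2 * k := by
    rw [hp, natDegree_pow]
    have h2 : (X ^ 2 - 1 : Polynomial ℝ).natDegree = 2 := by
      have hC : (1 : Polynomial ℝ) = C 1 := by simp
      rw [hC, natDegree_X_pow_sub_C]
    rw [h2]; ring
  have key : ∀ j, j ≤ k → ∃ s : Finset ℝ, j ≤ s.card ∧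
      ∀ x ∈ s, x ∈ Set.Ioo (-1 : ℝ) 1 ∧ eval x (derivative^[j] p) = 0 := by
    intro j hj
    induction j with
    | zero => exact ⟨∅, by simp⟩
    | succ j ih =>
      obtain ⟨s, hcard, hs⟩ := ih (Nat.le_of_succ_le hj)
      set q := derivative^[j] p with hq
      have hqd : (derivative q).natDegree = 2 * k - (j + 1) := by
        have h := aux_natDegree_iterate p (j + 1) (by omega)
        rw [Function.iterate_succ_apply', hdeg] at h
        exact h
      have hq0 : derivative q ≠ 0 := by
        intro h0
        rw [h0, natDegree_zero] at hqd; omega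
      have hdvd : (X ^ 2 - 1 : Polynomial ℝ) ^ (k - j) ∣ q :=
        pow_sub_dvd_iterate_derivative_pow _ k j
      have hroot : ∀ x : ℝ, x = 1 ∨ x = -1 → eval x q = 0 := by
        rintro x hx
        obtain ⟨r, hr⟩ := hdvd
        rw [hr, eval_mul, eval_pow]
        have hx2 : eval x (X ^ 2 - 1 : Polynomial ℝ) = 0 := by
          rcases hx with rfl | rfl <;> simp
        rw [hx2, zero_pow (by omega), zero_mul]
      set S : Finset ℝ := insert (-1 : ℝ) (insert 1 s) with hS
      have hSroots : ∀ x ∈ S, eval x q = 0 := by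
        intro x hx
        simp only [hS, Finset.mem_insert] at hx
        rcases hx with rfl | rfl | hx
        · exact hroot _ (Or.inr rfl)
        · exact hroot _ (Or.inl rfl)
        · exact (hs x hx).2
      have hSmem : ∀ x ∈ S, -1 ≤ x ∧ x ≤ 1 := by
        intro x hx
        simp only [hS, Finset.mem_insert] at hx
        rcases hx with rfl | rfl | hx
        · constructor <;> norm_num
        · constructor <;> norm_num
        · exact ⟨(hs x hx).1.1.le, (hs x hx).1.2.le⟩
      have hScard : j + 2 ≤ S.card := by
        have h1 : (1 : ℝ) ∉ s := fun h => absurd (hs 1 h).1.2 (lt_irrefl 1)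
        have h2 : (-1 : ℝ) ∉ insert (1 : ℝ) s := by
          simp only [Finset.mem_insert]
          rintro (h | h)
          · norm_num at h
          · exact absurd (hs _ h).1.1 (lt_irrefl _)
        rw [hS, Finset.card_insert_of_notMem h2, Finset.card_insert_of_notMem h1]
        omega
      classical
      set T : Finset ℝ :=
        (derivative q).roots.toFinset.filter (fun x => -1 < x ∧ x < 1) with hT
      have hinter : S.card ≤ (T \ S).card + 1 := by
        apply Finset.card_le_diff_of_interleaved
        intro x hx y hy hxy _
        obtain ⟨z, hz1, hz2⟩ := exists_deriv_eq_zero hxy q.continuousOn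
          ((hSroots x hx).trans (hSroots y hy).symm)
        refine ⟨z, ?_, hz1.1, hz1.2⟩
        rw [hT, Finset.mem_filter, Multiset.mem_toFinset, mem_roots hq0]
        have hz3 : eval z (derivative q) = 0 := by rw [← q.deriv]; exact hz2
        exact ⟨hz3, (hSmem x hx).1.trans_lt hz1.1, hz1.2.trans_le (hSmem y hy).2⟩
      have hTcard : j + 1 ≤ T.card := by
        have hsd : (T \ S).card ≤ T.card := Finset.card_le_card Finset.sdiff_subset
        omega
      refine ⟨T, hTcard, ?_⟩
      intro x hx
      rw [hT, Finset.mem_filter, Multiset.mem_toFinset, mem_roots hq0] at hx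
      refine ⟨⟨hx.2.1, hx.2.2⟩, ?_⟩
      rw [Function.iterate_succ_apply']
      exact hx.1
  obtain ⟨s, hcard, hs⟩ := key k le_rfl
  obtain ⟨t, hts, htcard⟩ := Finset.exists_subset_card_eq hcard
  exact ⟨t, htcard, fun x hx => hs x (hts hx)⟩
end

section
/- Let h : ℝ → ℝ be twice differentiable and let λ₁, λ₂ ≥ 0. Suppose h''(t) + (λ₁ + λ₂)·h'(t) + λ₁·λ₂·h(t) ≥ 0 for every t ≥ 0, h(0) ≥ 0, and h'(0) + λ₂·h(0) ≥ 0. Then h(t) ≥ 0 for every t ≥ 0. -/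
lemma aux_first_order (f : ℝ → ℝ) (hf : Differentiable ℝ f) (l : ℝ) (hl : 0 ≤ l)
    (hineq : ∀ t ≥ (0 : ℝ), deriv f t + l * f t ≥ 0) (h0 : f 0 ≥ 0) :
    ∀ t ≥ (0 : ℝ), f t ≥ 0 := by
  intro t ht
  set φ : ℝ → ℝ := fun t => Real.exp (l * t) * f t with hφ
  have hφd : Differentiable ℝ φ := by
    exact Differentiable.mul (by fun_prop) hf
  have hderiv : ∀ x, deriv φ x = Real.exp (l * x) * (deriv f x + l * f x) := by
    intro x
    have h1 : HasDerivAt (fun t => Real.exp (l * t)) (l * Real.exp (l * x)) x := by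
      have := (Real.hasDerivAt_exp (l * x)).comp x ((hasDerivAt_id x).const_mul l)
      simpa [mul_comm, Function.comp_def] using this
    have h2 : HasDerivAt φ (l * Real.exp (l * x) * f x + Real.exp (l * x) * deriv f x) x :=
      h1.mul (hf x).hasDerivAt
    rw [h2.deriv]; ring
  have hmono : MonotoneOn φ (Set.Ici (0 : ℝ)) := by
    apply monotoneOn_of_deriv_nonneg (convex_Ici 0) hφd.continuous.continuousOn
      (hφd.differentiableOn)
    intro x hx
    rw [interior_Ici] at hx
    rw [hderiv]
    exact mul_nonneg (Real.exp_pos _).le (hineq x hx.le)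
  have := hmono (Set.self_mem_Ici) ht ht
  have h0' : φ 0 = f 0 := by simp [hφ]
  have hpos : 0 < Real.exp (l * t) := Real.exp_pos _
  have : 0 ≤ φ t := by rw [h0'] at this; linarith
  simp only [hφ] at this
  nlinarith

/-- Second-order exponential control barrier function condition (paper's equations
(11) and (22)): if `h'' + (λ₁+λ₂)h' + λ₁λ₂h ≥ 0` on `t ≥ 0` with `λ₁, λ₂ ≥ 0`,
`h(0) ≥ 0` and `h'(0) + λ₂h(0) ≥ 0`, then `h(t) ≥ 0` for all `t ≥ 0`. -/
theorem stmt_19 (h : ℝ → ℝ) (hd1 : Differentiable ℝ h)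
    (hd2 : Differentiable ℝ (deriv h)) (l1 l2 : ℝ) (hl1 : 0 ≤ l1) (hl2 : 0 ≤ l2)
    (hineq : ∀ t ≥ (0 : ℝ),
      deriv (deriv h) t + (l1 + l2) * deriv h t + l1 * l2 * h t ≥ 0)
    (h0 : h 0 ≥ 0) (h0' : deriv h 0 + l2 * h 0 ≥ 0) :
    ∀ t ≥ (0 : ℝ), h t ≥ 0 := by
  set g : ℝ → ℝ := fun t => deriv h t + l2 * h t with hg
  have hgd : Differentiable ℝ g := hd2.add (hd1.const_mul l2)
  have hgderiv : ∀ x, deriv g x = deriv (deriv h) x + l2 * deriv h x := by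
    intro x
    have h2 : HasDerivAt g (deriv (deriv h) x + l2 * deriv h x) x :=
      (hd2 x).hasDerivAt.add (((hd1 x).hasDerivAt).const_mul l2)
    exact h2.deriv
  have hgpos : ∀ t ≥ (0 : ℝ), g t ≥ 0 := by
    apply aux_first_order g hgd l1 hl1
    · intro t ht
      rw [hgderiv]
      have := hineq t ht
      simp only [hg]
      ring_nf
      ring_nf at this ⊢
      linarith
    · simpa [hg] using h0'
  intro t ht
  have := aux_first_order h hd1 l2 hl2 (fun t ht => hgpos t ht) h0 t ht
  exact this
end
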